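/- Fix λ > 0, k ≥ 1, n ≥ 1, p ∈ [0,1], and times 0 ≤ t₁ ≤ t₂, and write L = e^{−λ(t₂−t₁)}. Under the two-time dynamic Erdős–Rényi measure μ_{n,p}^{(t₁,t₂)}, E[ f_{n,k}(ω₁) · f_{n,k}(ω₂) ] = C(n,k+1) · Σ_{i=0}^{k+1} C(k+1,i) · C(n−k−1, k+1−i) · p^{2·C(k+1,2) − C(i,2)} · ( p + (1−p)·L )^{C(i,2)}. -/

import Mathlib

open Finset MeasureTheory Filter Real

noncomputable section

open scoped Classical

/-- The edge set `E_n`: unordered pairs of distinct elements of `[n]`. -/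
abbrev Edge (n : ℕ) := {e : Sym2 (Fin n) // ¬ e.IsDiag}

/-- An edge configuration on `[n]`. -/
abbrev Config (n : ℕ) := Edge n → Bool

/-- Bernoulli(p) weight of a state. -/
def bern (p : ℝ) (b : Bool) : ℝ := if b then p else 1 - p

/-- Weight of a configuration under the static Erdős–Rényi measure `μ_{n,p}`. -/
def staticWeight (n : ℕ) (p : ℝ) (ω : Config n) : ℝ := ∏ e : Edge n, bern p (ω e)

/-- Expectation under the static Erdős–Rényi measure `μ_{n,p}`. -/
def staticExp (n : ℕ) (p : ℝ) (f : Config n → ℝ) : ℝ :=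
  ∑ ω : Config n, staticWeight n p ω * f ω

/-- Variance under the static Erdős–Rényi measure `μ_{n,p}`. -/
def staticVar (n : ℕ) (p : ℝ) (f : Config n → ℝ) : ℝ :=
  staticExp n p (fun ω => (f ω - staticExp n p f) ^ 2)

/-- `A` is a clique of the graph `G(ω)`: every pair of distinct elements of `A`
is an edge of `G(ω)`. -/
def IsCliqueOf {n : ℕ} (A : Finset (Fin n)) (ω : Config n) : Prop :=
  ∀ e : Edge n, e.1 ∈ A.sym2 → ω e = true

/-- The clique count `f_{n,j}(ω)`: the number of `(j+1)`-element subsets of `[n]`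
all of whose pairs are edges of `G(ω)`. -/
def cliqueCount (n j : ℕ) (ω : Config n) : ℕ :=
  ((Finset.powersetCard (j + 1) (Finset.univ : Finset (Fin n))).filter
    (fun A => IsCliqueOf A ω)).card

/-- Real-valued clique count. -/
def cliqueCountR (n j : ℕ) (ω : Config n) : ℝ := (cliqueCount n j ω : ℝ)

/-- The Euler characteristic `χ_n(ω) = Σ_{j=0}^{n-1} (-1)^j f_{n,j}(ω)`. -/
def eulerChar (n : ℕ) (ω : Config n) : ℝ :=
  ∑ j ∈ Finset.range n, (-1 : ℝ) ^ j * cliqueCountR n j ω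

/-- Transition probability of the stationary on/off Markov chain with invariant
law Bernoulli(p) over a time increment `s`. -/
def transP (lam p s : ℝ) (b b' : Bool) : ℝ :=
  if b then (if b' then p + (1 - p) * Real.exp (-lam * s)
             else (1 - p) * (1 - Real.exp (-lam * s)))
  else (if b' then p * (1 - Real.exp (-lam * s))
        else (1 - p) + p * Real.exp (-lam * s))

/-- Weight of a trajectory of the stationary on/off Markov chain observed at the
times `t 0 ≤ t 1 ≤ …`. -/
def pathWeight (lam p : ℝ) {m : ℕ} (t : Fin m → ℝ) (b : Fin m → Bool) : ℝ :=
  ∏ i : Fin m,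
    if (i : ℕ) = 0 then bern p (b i)
    else transP lam p (t i - t ⟨(i : ℕ) - 1, lt_of_le_of_lt (Nat.sub_le _ _) i.isLt⟩)
      (b ⟨(i : ℕ) - 1, lt_of_le_of_lt (Nat.sub_le _ _) i.isLt⟩) (b i)

/-- Weight of an `m`-tuple of edge configurations under the `m`-time dynamic
Erdős–Rényi measure `μ_{n,p}^{(t 0, …, t (m-1))}`. -/
def dynWeight (lam p : ℝ) (n : ℕ) {m : ℕ} (t : Fin m → ℝ) (ω : Fin m → Config n) : ℝ :=
  ∏ e : Edge n, pathWeight lam p t (fun i => ω i e)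

/-- Expectation under the `m`-time dynamic Erdős–Rényi measure. -/
def dynExp (lam p : ℝ) (n : ℕ) {m : ℕ} (t : Fin m → ℝ) (F : (Fin m → Config n) → ℝ) : ℝ :=
  ∑ ω : Fin m → Config n, dynWeight lam p n t ω * F ω

/-- The normalized clique count `f̄_{n,k}` (under the measure `μ_{n,p}`). -/
def fbar (n k : ℕ) (p : ℝ) (ω : Config n) : ℝ :=
  (cliqueCountR n k ω - staticExp n p (cliqueCountR n k)) /
    Real.sqrt (staticVar n p (cliqueCountR n k))

/-- The normalized Euler characteristic `χ̄_n` (under the measure `μ_{n,p}`). -/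
def chibar (n : ℕ) (p : ℝ) (ω : Config n) : ℝ :=
  (eulerChar n ω - staticExp n p (eulerChar n)) /
    Real.sqrt (staticVar n p (eulerChar n))

/-- The clique indicator `1_A(ω)` as a real number. -/
def cliqueInd {n : ℕ} (A : Finset (Fin n)) (ω : Config n) : ℝ :=
  if IsCliqueOf A ω then 1 else 0

/-- A quadruple of subsets has an independent set if one of them shares at most
one vertex with each of the others. -/
def HasIndepSet {n : ℕ} (A : Fin 4 → Finset (Fin n)) : Prop :=
  ∃ q : Fin 4, ∀ r : Fin 4, r ≠ q → ((A q) ∩ (A r)).card ≤ 1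

/-- The quantity `g(h; Ā)` built from clique indicators at three times. -/
def gQuad {n : ℕ} (A : Fin 4 → Finset (Fin n)) (ω : Fin 3 → Config n) : ℝ :=
  (cliqueInd (A 0) (ω 2) - cliqueInd (A 0) (ω 1)) *
  (cliqueInd (A 1) (ω 2) - cliqueInd (A 1) (ω 1)) *
  (cliqueInd (A 2) (ω 1) - cliqueInd (A 2) (ω 0)) *
  (cliqueInd (A 3) (ω 1) - cliqueInd (A 3) (ω 0))

/-- `ver(Ā)`: inclusion–exclusion count of vertices. -/
def verA {n : ℕ} (A : Fin 4 → Finset (Fin n)) : ℤ :=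
  (∑ q : Fin 4, ((A q).card : ℤ))
  - (∑ q : Fin 4, ∑ r : Fin 4, if q < r then (((A q) ∩ (A r)).card : ℤ) else 0)
  + (∑ q : Fin 4, ∑ r : Fin 4, ∑ s : Fin 4,
      if q < r ∧ r < s then (((A q) ∩ (A r) ∩ (A s)).card : ℤ) else 0)
  - ((A 0 ∩ A 1 ∩ A 2 ∩ A 3).card : ℤ)

/-- `pair(Ā)`: inclusion–exclusion count of potential edges. -/
def pairA {n : ℕ} (A : Fin 4 → Finset (Fin n)) : ℤ :=
  (∑ q : Fin 4, (Nat.choose (A q).card 2 : ℤ))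
  - (∑ q : Fin 4, ∑ r : Fin 4, if q < r then (Nat.choose ((A q) ∩ (A r)).card 2 : ℤ) else 0)
  + (∑ q : Fin 4, ∑ r : Fin 4, ∑ s : Fin 4,
      if q < r ∧ r < s then (Nat.choose ((A q) ∩ (A r) ∩ (A s)).card 2 : ℤ) else 0)
  - (Nat.choose (A 0 ∩ A 1 ∩ A 2 ∩ A 3).card 2 : ℤ)

/-! ### Auxiliary lemmas for Statement 6 -/

section Aux

lemma mem_image_offDiag' {α : Type*} [DecidableEq α] (S : Finset α) (z : Sym2 α) :
    z ∈ S.offDiag.image Sym2.mk.uncurry ↔ z ∈ S.sym2 ∧ ¬ z.IsDiag := by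
  induction z using Sym2.ind with
  | _ x y =>
    simp only [Finset.mem_image, Finset.mem_offDiag, Finset.mk_mem_sym2_iff, Sym2.mk_isDiag_iff,
      Prod.exists, Function.uncurry_apply_pair, Sym2.eq_iff]
    constructor
    · rintro ⟨a, b, ⟨ha, hb, hab⟩, (⟨rfl, rfl⟩ | ⟨rfl, rfl⟩)⟩ <;> tauto
    · rintro ⟨⟨hx, hy⟩, hxy⟩; exact ⟨x, y, ⟨hx, hy, hxy⟩, Or.inl ⟨rfl, rfl⟩⟩

lemma card_edge_filter_sym2 {n : ℕ} (S : Finset (Fin n)) :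
    (Finset.univ.filter (fun e : Edge n => e.1 ∈ S.sym2)).card = Nat.choose S.card 2 := by
  rw [← Sym2.card_image_offDiag S]
  apply Finset.card_bij (fun e _ => e.1)
  · intro e he
    rw [mem_image_offDiag']
    exact ⟨(Finset.mem_filter.mp he).2, e.2⟩
  · intro e _ e' _ h; exact Subtype.ext h
  · intro z hz
    rw [mem_image_offDiag'] at hz
    exact ⟨⟨z, hz.2⟩, by simp only [Finset.mem_filter, Finset.mem_univ, true_and]; exact hz.1, rfl⟩

lemma prod_ite_one_pow {K : Type*} [Fintype K] (P : K → Prop) [DecidablePred P] (c : ℝ) :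
    ∏ e : K, (if P e then c else 1) = c ^ (Finset.univ.filter P).card := by
  rw [← Finset.prod_filter, Finset.prod_const]

lemma pathWeight_two (lam p t₁ t₂ : ℝ) (b : Fin 2 → Bool) :
    pathWeight lam p ![t₁, t₂] b = bern p (b 0) * transP lam p (t₂ - t₁) (b 0) (b 1) := by
  rw [pathWeight, Fin.prod_univ_two]
  norm_num

lemma sum_fin2_bool (f : (Fin 2 → Bool) → ℝ) :
    ∑ q : Fin 2 → Bool, f q
      = f ![false, false] + f ![false, true] + f ![true, false] + f ![true, true] := by
  rw [← Fintype.sum_equiv ((piFinTwoEquiv fun _ => Bool).symm) (fun p => f ![p.1, p.2]) f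
      (fun p => by congr 1)]
  rw [Fintype.sum_prod_type]
  simp [Fintype.sum_bool]
  ring

lemma pathsum (lam p t₁ t₂ : ℝ) (a c : Prop) [Decidable a] [Decidable c] :
    (∑ q : Fin 2 → Bool, pathWeight lam p ![t₁, t₂] q *
        ((if a then (if q 0 then (1:ℝ) else 0) else 1) *
         (if c then (if q 1 then (1:ℝ) else 0) else 1)))
    = if a ∧ c then p * (p + (1-p) * Real.exp (-lam * (t₂ - t₁)))
      else if a ∨ c then p else 1 := by
  rw [sum_fin2_bool]
  simp only [pathWeight_two]
  by_cases ha : a <;> by_cases hc : c <;>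
    simp [ha, hc, bern, transP, Matrix.cons_val_zero, Matrix.cons_val_one] <;> ring

lemma ite_split (a c : Prop) [Decidable a] [Decidable c] (v w : ℝ) :
    (if a ∧ c then v else if a ∨ c then w else 1)
      = (if a ∧ c then v else 1) * ((if a ∧ ¬ c then w else 1) * (if ¬ a ∧ c then w else 1)) := by
  by_cases ha : a <;> by_cases hc : c <;> simp [ha, hc]

lemma sum_prod_swap {n : ℕ} (F : Edge n → (Fin 2 → Bool) → ℝ) :
    ∑ ω : Fin 2 → Config n, ∏ e : Edge n, F e (fun i => ω i e)
      = ∏ e : Edge n, ∑ q : Fin 2 → Bool, F e q := by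
  rw [Fintype.prod_sum]
  exact (Fintype.sum_equiv (Equiv.piComm fun (_ : Fin 2) (_ : Edge n) => Bool) _ _ (fun ω => rfl))

lemma cliqueInd_eq_prod {n : ℕ} (A : Finset (Fin n)) (ω : Config n) :
    cliqueInd A ω = ∏ e : Edge n, (if e.1 ∈ A.sym2 then (if ω e then (1:ℝ) else 0) else 1) := by
  rw [cliqueInd, ← Finset.prod_filter, Finset.prod_boole]
  by_cases h : IsCliqueOf A ω
  · rw [if_pos h, if_pos]
    intro e he
    exact h e (Finset.mem_filter.mp he).2
  · rw [if_neg h, if_neg]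
    intro hc
    exact h (fun e he => hc e (by simp only [Finset.mem_filter, Finset.mem_univ, true_and]; exact he))

lemma cliqueCountR_eq_sum (n k : ℕ) (ω : Config n) :
    cliqueCountR n k ω
      = ∑ A ∈ Finset.powersetCard (k+1) (Finset.univ : Finset (Fin n)), cliqueInd A ω := by
  rw [cliqueCountR, cliqueCount, Finset.card_filter, Nat.cast_sum]
  simp [cliqueInd, apply_ite (Nat.cast : ℕ → ℝ)]

set_option maxHeartbeats 1600000 in
lemma dyn_pair (lam p t₁ t₂ : ℝ) {n : ℕ} (k : ℕ) (A B : Finset (Fin n))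
    (hA : A.card = k + 1) (hB : B.card = k + 1) :
    ∑ ω : Fin 2 → Config n,
        dynWeight lam p n ![t₁, t₂] ω * (cliqueInd A (ω 0) * cliqueInd B (ω 1))
    = p ^ (2 * Nat.choose (k+1) 2 - Nat.choose (A ∩ B).card 2) *
      (p + (1 - p) * Real.exp (-lam * (t₂ - t₁))) ^ Nat.choose (A ∩ B).card 2 := by
  set X : ℝ := p + (1 - p) * Real.exp (-lam * (t₂ - t₁)) with hX
  have step1 : ∀ ω : Fin 2 → Config n,
      dynWeight lam p n ![t₁, t₂] ω * (cliqueInd A (ω 0) * cliqueInd B (ω 1))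
      = ∏ e : Edge n, (pathWeight lam p ![t₁, t₂] (fun i => ω i e) *
          ((if e.1 ∈ A.sym2 then (if ω 0 e then (1:ℝ) else 0) else 1) *
           (if e.1 ∈ B.sym2 then (if ω 1 e then (1:ℝ) else 0) else 1))) := by
    intro ω
    rw [dynWeight, cliqueInd_eq_prod, cliqueInd_eq_prod, ← Finset.prod_mul_distrib,
      ← Finset.prod_mul_distrib]
  simp only [step1]
  rw [sum_prod_swap (fun (e : Edge n) (q : Fin 2 → Bool) =>
    pathWeight lam p ![t₁, t₂] q *
      ((if e.1 ∈ A.sym2 then (if q 0 then (1:ℝ) else 0) else 1) *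
       (if e.1 ∈ B.sym2 then (if q 1 then (1:ℝ) else 0) else 1)))]
  rw [Finset.prod_congr rfl (fun e _ => pathsum lam p t₁ t₂ (e.1 ∈ A.sym2) (e.1 ∈ B.sym2))]
  rw [Finset.prod_congr rfl
    (fun e _ => ite_split (e.1 ∈ A.sym2) (e.1 ∈ B.sym2) (p * X) p)]
  rw [Finset.prod_mul_distrib, Finset.prod_mul_distrib,
    prod_ite_one_pow, prod_ite_one_pow, prod_ite_one_pow]
  -- identify cardinalities
  have hboth : (Finset.univ.filter (fun e : Edge n => e.1 ∈ A.sym2 ∧ e.1 ∈ B.sym2)).card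
      = Nat.choose (A ∩ B).card 2 := by
    rw [← card_edge_filter_sym2 (A ∩ B)]
    congr 1
    apply Finset.filter_congr
    intro e _
    simp [Finset.mem_sym2_iff, Finset.mem_inter, forall_and]
  have hAcard : (Finset.univ.filter (fun e : Edge n => e.1 ∈ A.sym2 ∧ ¬ e.1 ∈ B.sym2)).card
      = Nat.choose (k+1) 2 - Nat.choose (A ∩ B).card 2 := by
    have h := Finset.card_filter_add_card_filter_not
      (s := Finset.univ.filter (fun e : Edge n => e.1 ∈ A.sym2))
      (p := fun e : Edge n => e.1 ∈ B.sym2)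
    rw [Finset.filter_filter, Finset.filter_filter, card_edge_filter_sym2 A, hA] at h
    have h2 : (Finset.univ.filter (fun e : Edge n => e.1 ∈ A.sym2 ∧ e.1 ∈ B.sym2)).card
        = Nat.choose (A ∩ B).card 2 := hboth
    omega
  have hBcard : (Finset.univ.filter (fun e : Edge n => ¬ e.1 ∈ A.sym2 ∧ e.1 ∈ B.sym2)).card
      = Nat.choose (k+1) 2 - Nat.choose (A ∩ B).card 2 := by
    have h := Finset.card_filter_add_card_filter_not
      (s := Finset.univ.filter (fun e : Edge n => e.1 ∈ B.sym2))
      (p := fun e : Edge n => e.1 ∈ A.sym2)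
    rw [Finset.filter_filter, Finset.filter_filter, card_edge_filter_sym2 B, hB] at h
    have hboth' : (Finset.univ.filter (fun e : Edge n => e.1 ∈ B.sym2 ∧ e.1 ∈ A.sym2)).card
        = Nat.choose (A ∩ B).card 2 := by
      rw [← hboth]; congr 1; apply Finset.filter_congr; intro e _; simp [and_comm]
    have h3 : (Finset.univ.filter (fun e : Edge n => e.1 ∈ B.sym2 ∧ ¬ e.1 ∈ A.sym2)).card
        = (Finset.univ.filter (fun e : Edge n => ¬ e.1 ∈ A.sym2 ∧ e.1 ∈ B.sym2)).card := by
      congr 1; apply Finset.filter_congr; intro e _; simp [and_comm]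
    omega
  rw [hboth, hAcard, hBcard]
  have hm : Nat.choose (A ∩ B).card 2 ≤ Nat.choose (k+1) 2 := by
    apply Nat.choose_le_choose
    rw [← hA]
    exact Finset.card_le_card Finset.inter_subset_left
  set m := Nat.choose (A ∩ B).card 2
  set C2 := Nat.choose (k+1) 2
  have hexp : m + ((C2 - m) + (C2 - m)) = 2 * C2 - m := by omega
  rw [mul_pow, ← pow_add, ← hexp, pow_add]
  ring

lemma count_B {n k : ℕ} (i : ℕ) (hi : i ≤ k + 1) (A : Finset (Fin n)) (hA : A.card = k + 1) :
    ((Finset.powersetCard (k+1) (Finset.univ : Finset (Fin n))).filter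
      (fun B => (A ∩ B).card = i)).card
    = Nat.choose (k+1) i * Nat.choose (n - (k+1)) (k+1-i) := by
  have hcompl : Aᶜ.card = n - (k+1) := by
    rw [Finset.card_compl, hA, Fintype.card_fin]
  have hkey : ∀ (C D : Finset (Fin n)), C ⊆ A → D ⊆ Aᶜ →
      A ∩ (C ∪ D) = C ∧ (C ∪ D) \ A = D := by
    intro C D hC hD
    have hC' : ∀ a ∈ C, a ∈ A := fun a ha => hC ha
    have hD' : ∀ a ∈ D, a ∉ A := fun a ha => Finset.mem_compl.mp (hD ha)
    constructor <;> ext a <;>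
      simp only [Finset.mem_inter, Finset.mem_union, Finset.mem_sdiff] <;>
      constructor
    · rintro ⟨haA, (hc | hd)⟩
      · exact hc
      · exact absurd haA (hD' a hd)
    · intro hc; exact ⟨hC' a hc, Or.inl hc⟩
    · rintro ⟨(hc | hd), hnA⟩
      · exact absurd (hC' a hc) hnA
      · exact hd
    · intro hd; exact ⟨Or.inr hd, hD' a hd⟩
  have hmain : ((A.powersetCard i) ×ˢ (Aᶜ.powersetCard (k+1-i))).card
      = ((Finset.powersetCard (k+1) (Finset.univ : Finset (Fin n))).filter
          (fun B => (A ∩ B).card = i)).card := by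
    apply Finset.card_bij (fun CD _ => CD.1 ∪ CD.2)
    · rintro ⟨C, D⟩ hCD
      simp only [Finset.mem_product, Finset.mem_powersetCard] at hCD
      obtain ⟨hC, hD⟩ := hCD
      obtain ⟨hkeyC, hkeyD⟩ := hkey C D hC.1 hD.1
      have hdisj : Disjoint C D := by
        rw [Finset.disjoint_left]
        intro a haC haD
        exact Finset.mem_compl.mp (hD.1 haD) (hC.1 haC)
      simp only [Finset.mem_filter, Finset.mem_powersetCard]
      refine ⟨⟨Finset.subset_univ _, ?_⟩, ?_⟩
      · rw [Finset.card_union_of_disjoint hdisj, hC.2, hD.2]; omega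
      · rw [hkeyC, hC.2]
    · rintro ⟨C, D⟩ hCD ⟨C', D'⟩ hCD' h
      simp only [Finset.mem_product, Finset.mem_powersetCard] at hCD hCD'
      dsimp only at h
      obtain ⟨h1, h2⟩ := hkey C D hCD.1.1 hCD.2.1
      obtain ⟨h1', h2'⟩ := hkey C' D' hCD'.1.1 hCD'.2.1
      have hCeq : C = C' := by rw [← h1, ← h1', h]
      have hDeq : D = D' := by rw [← h2, ← h2', h]
      rw [hCeq, hDeq]
    · intro B hB
      simp only [Finset.mem_filter, Finset.mem_powersetCard] at hB
      obtain ⟨⟨_, hBcard⟩, hABi⟩ := hB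
      have hsub2 : B \ A ⊆ Aᶜ := fun a ha => Finset.mem_compl.mpr (Finset.mem_sdiff.mp ha).2
      have hcard : (B \ A).card + (B ∩ A).card = B.card := Finset.card_sdiff_add_card_inter B A
      rw [Finset.inter_comm B A, hABi, hBcard] at hcard
      refine ⟨(A ∩ B, B \ A), ?_, ?_⟩
      · simp only [Finset.mem_product, Finset.mem_powersetCard]
        exact ⟨⟨Finset.inter_subset_left, hABi⟩, hsub2, by omega⟩
      · dsimp only
        rw [Finset.inter_comm A B, Finset.union_comm, Finset.sdiff_union_inter]
  rw [← hmain, Finset.card_product, Finset.card_powersetCard, Finset.card_powersetCard,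
    hA, hcompl]

end Aux

/-- Exact formula for the two-time second moment of the clique
count under the dynamic Erdős–Rényi measure. -/
theorem dynamic_second_moment_cliqueCount (lam : ℝ) (hlam : 0 < lam)
    (k : ℕ) (hk : 1 ≤ k) (n : ℕ) (hn : 1 ≤ n) (p : ℝ)
    (hp : p ∈ Set.Icc (0 : ℝ) 1) (t₁ t₂ : ℝ) (ht₁ : 0 ≤ t₁) (ht : t₁ ≤ t₂) :
    dynExp lam p n ![t₁, t₂]
        (fun ω => cliqueCountR n k (ω 0) * cliqueCountR n k (ω 1)) =
      (Nat.choose n (k + 1) : ℝ) *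
        ∑ i ∈ Finset.range (k + 2),
          (Nat.choose (k + 1) i : ℝ) * (Nat.choose (n - k - 1) (k + 1 - i) : ℝ) *
            p ^ (2 * Nat.choose (k + 1) 2 - Nat.choose i 2) *
            (p + (1 - p) * Real.exp (-lam * (t₂ - t₁))) ^ (Nat.choose i 2) := by
  set P := Finset.powersetCard (k+1) (Finset.univ : Finset (Fin n)) with hP
  set X : ℝ := p + (1 - p) * Real.exp (-lam * (t₂ - t₁)) with hX
  have h1 : ∀ ω : Fin 2 → Config n,
      dynWeight lam p n ![t₁, t₂] ω * (cliqueCountR n k (ω 0) * cliqueCountR n k (ω 1))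
      = ∑ A ∈ P, ∑ B ∈ P,
          dynWeight lam p n ![t₁, t₂] ω * (cliqueInd A (ω 0) * cliqueInd B (ω 1)) := by
    intro ω
    rw [cliqueCountR_eq_sum, cliqueCountR_eq_sum, Finset.sum_mul_sum, Finset.mul_sum]
    exact Finset.sum_congr rfl (fun A _ => by rw [Finset.mul_sum])
  have hsplit : dynExp lam p n ![t₁, t₂]
      (fun ω => cliqueCountR n k (ω 0) * cliqueCountR n k (ω 1))
      = ∑ A ∈ P, ∑ B ∈ P, ∑ ω : Fin 2 → Config n,
          dynWeight lam p n ![t₁, t₂] ω * (cliqueInd A (ω 0) * cliqueInd B (ω 1)) := by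
    rw [dynExp]
    simp only [h1]
    rw [Finset.sum_comm]
    exact Finset.sum_congr rfl (fun A _ => Finset.sum_comm)
  rw [hsplit]
  have hterm : ∀ A ∈ P,
      (∑ B ∈ P, ∑ ω : Fin 2 → Config n,
          dynWeight lam p n ![t₁, t₂] ω * (cliqueInd A (ω 0) * cliqueInd B (ω 1)))
      = ∑ i ∈ Finset.range (k + 2),
          ((Nat.choose (k+1) i * Nat.choose (n - (k+1)) (k+1-i) : ℕ) : ℝ) *
            (p ^ (2 * Nat.choose (k + 1) 2 - Nat.choose i 2) * X ^ (Nat.choose i 2)) := by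
    intro A hA
    have hAcard : A.card = k + 1 := (Finset.mem_powersetCard.mp hA).2
    rw [Finset.sum_congr rfl (fun B hB =>
      dyn_pair lam p t₁ t₂ k A B hAcard (Finset.mem_powersetCard.mp hB).2)]
    have hmaps : ∀ B ∈ P, (A ∩ B).card ∈ Finset.range (k + 2) := by
      intro B _
      rw [Finset.mem_range]
      have : (A ∩ B).card ≤ A.card := Finset.card_le_card Finset.inter_subset_left
      omega
    rw [← Finset.sum_fiberwise_of_maps_to' hmaps
      (fun i => p ^ (2 * Nat.choose (k + 1) 2 - Nat.choose i 2) * X ^ (Nat.choose i 2))]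
    refine Finset.sum_congr rfl (fun i hi => ?_)
    rw [Finset.sum_const, nsmul_eq_mul,
      count_B i (by rw [Finset.mem_range] at hi; omega) A hAcard]
  rw [Finset.sum_congr rfl hterm, Finset.sum_const, nsmul_eq_mul, hP,
    Finset.card_powersetCard, Finset.card_univ, Fintype.card_fin]
  congr 1
  refine Finset.sum_congr rfl (fun i hi => ?_)
  rw [show n - (k+1) = n - k - 1 by omega]
  push_cast
  ring

end
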